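/- Let Θ be a tree system of cut pairs over T whose constituent spaces M_v (v ∈ V) are connected, have no cut points, and have no cut pairs, and let M̄_T be the completion of the total space. Then: (1) M̄_T is connected and has no cut points; (2) the cut pairs of M̄_T are exactly the two-point subspaces M_w for w ∈ W, and each of these is inseparable (no other cut pair separates its two points). -/

import Mathlib

section TreeSystem

open scoped Classical

variable {U : Type*} (M : U → Type*)

noncomputable def fiberDistM (m : ∀ u, MetricSpace (M u)) (a b : Σ u, M u) : ℝ :=
  letI := m b.1
  if h : a.1 = b.1 then dist (h ▸ a.2) b.2 else 0

noncomputable def chainLengthM (m : ∀ u, MetricSpace (M u))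
    (c : List ((Σ u, M u) × (Σ u, M u))) : ℝ :=
  (c.map fun pr => fiberDistM M m pr.1 pr.2).sum

def IsLinkingChainM (R : (Σ u, M u) → (Σ u, M u) → Prop)
    (c : List ((Σ u, M u) × (Σ u, M u))) (x y : Σ u, M u) : Prop :=
  ∃ hne : c ≠ [], (c.head hne).1 = x ∧ (c.getLast hne).2 = y ∧
    (∀ pr ∈ c, pr.1.1 = pr.2.1) ∧ c.Chain' (fun pr pr' => R pr.2 pr'.1)

noncomputable def quotDistM (m : ∀ u, MetricSpace (M u))
    (R : (Σ u, M u) → (Σ u, M u) → Prop) (x y : Σ u, M u) : ℝ :=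
  sInf {L : ℝ | ∃ c, IsLinkingChainM M R c x y ∧ chainLengthM M m c = L}

def cutRel (G : SimpleGraph U) (Vset Wset : Set U)
    (ie : ∀ v w : U, M w → M v) (a b : Σ u, M u) : Prop :=
  ∃ (v w : U) (x : M w), v ∈ Vset ∧ w ∈ Wset ∧ G.Adj v w ∧
    a = ⟨w, x⟩ ∧ b = ⟨v, ie v w x⟩

end TreeSystem

section CutPairs

variable {Z : Type*} [TopologicalSpace Z]

/-- The closed set `t` separates the points `x` and `y`: both lie outside `t` and in
different components of the complement of `t`. -/
def SeparatesPts (t : Set Z) (x y : Z) : Prop :=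
  x ∉ t ∧ y ∉ t ∧ ∀ C : Set Z, C ⊆ tᶜ → IsPreconnected C → x ∈ C → y ∉ C

/-- `s` is a cut pair: a two-point separating set neither of whose points is a cut point. -/
def IsCutPairSet (s : Set Z) : Prop :=
  (∃ a b : Z, a ≠ b ∧ s = {a, b}) ∧ ¬ IsPreconnected sᶜ ∧
    ∀ p ∈ s, IsPreconnected ({p}ᶜ : Set Z)

/-- A cut pair is inseparable if no other cut pair separates its two points. -/
def IsInseparableCutPair (s : Set Z) : Prop :=
  IsCutPairSet s ∧ ∀ t, IsCutPairSet t → t ≠ s →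
    ∀ a b : Z, a ≠ b → s = {a, b} → ¬ SeparatesPts t a b

end CutPairs



lemma eqvGen_iff_rtg {α : Type*} {r : α → α → Prop} {a b : α} :
    Relation.EqvGen r a b ↔ Relation.ReflTransGen (fun x y => r x y ∨ r y x) a b := by
  constructor
  · intro h
    induction h with
    | rel x y h => exact Relation.ReflTransGen.single (Or.inl h)
    | refl x => exact Relation.ReflTransGen.refl
    | symm x y _ ih =>
      exact Relation.ReflTransGen.mono (fun _ _ h => Or.symm h) _ _ ih.swap
    | trans x y z _ _ ih₁ ih₂ => exact ih₁.trans ih₂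
  · intro h
    induction h with
    | refl => exact Relation.EqvGen.refl _
    | tail _ hbc ih =>
      rcases hbc with h' | h'
      · exact ih.trans _ _ _ (Relation.EqvGen.rel _ _ h')
      · exact ih.trans _ _ _ (Relation.EqvGen.symm _ _ (Relation.EqvGen.rel _ _ h'))

lemma rtg_exists_list {α : Type*} {S : α → α → Prop} {a b : α}
    (h : Relation.ReflTransGen S a b) :
    ∃ l : List α, List.Chain S a l ∧ (a :: l).getLast (List.cons_ne_nil _ _) = b := by
  induction h using Relation.ReflTransGen.head_induction_on with
  | refl => exact ⟨[], List.Chain.nil, rfl⟩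
  | head hab _ ih =>
    obtain ⟨l, hc, hl⟩ := ih
    exact ⟨_ :: l, List.Chain.cons hab hc, by rwa [List.getLast_cons (List.cons_ne_nil _ _)]⟩

section Aux
open scoped Classical

variable {U : Type*} {M : U → Type*} [∀ u, MetricSpace (M u)]

lemma fiberDist_same (u : U) (a b : M u) :
    fiberDistM M (fun _ => inferInstance) (⟨u, a⟩ : Σ u, M u) ⟨u, b⟩ = dist a b := by
  simp [fiberDistM]

lemma fiberDist_ne {a b : Σ u, M u} (h : a.1 ≠ b.1) :
    fiberDistM M (fun _ => inferInstance) a b = 0 := by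
  simp [fiberDistM, h]

lemma fiberDist_nonneg (a b : Σ u, M u) :
    0 ≤ fiberDistM M (fun _ => inferInstance) a b := by
  unfold fiberDistM
  split <;> simp [dist_nonneg]

lemma fiberDist_self (a : Σ u, M u) :
    fiberDistM M (fun _ => inferInstance) a a = 0 := by
  obtain ⟨u, a⟩ := a; rw [fiberDist_same]; simp

lemma chainLength_nonneg (c : List ((Σ u, M u) × (Σ u, M u))) :
    0 ≤ chainLengthM M (fun _ => inferInstance) c := by
  apply List.sum_nonneg
  intro x hx
  simp only [List.mem_map] at hx
  obtain ⟨pr, _, rfl⟩ := hx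
  exact fiberDist_nonneg _ _

noncomputable def wcost : List (Σ u, M u) → ℝ
  | [] => 0
  | [_] => 0
  | a :: b :: l => fiberDistM M (fun _ => inferInstance) a b + wcost (b :: l)

lemma wcost_nonneg : ∀ p : List (Σ u, M u), 0 ≤ wcost p
  | [] => le_refl _
  | [_] => le_refl _
  | a :: b :: l => add_nonneg (fiberDist_nonneg a b) (wcost_nonneg (b :: l))

lemma wcost_cons_cons (a b : Σ u, M u) (l : List (Σ u, M u)) :
    wcost (a :: b :: l) = fiberDistM M (fun _ => inferInstance) a b + wcost (b :: l) := rfl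

lemma wcost_append : ∀ (l : List (Σ u, M u)) (b : Σ u, M u) (l₂ : List (Σ u, M u)),
    wcost (l ++ b :: l₂) = wcost (l ++ [b]) + wcost (b :: l₂)
  | [], b, l₂ => by simp [wcost]
  | [a], b, l₂ => by simp [wcost, wcost_cons_cons]
  | a :: a' :: l, b, l₂ => by
    have := wcost_append (a' :: l) b l₂
    simp only [List.cons_append, wcost_cons_cons] at *
    rw [this]; ring

variable (G : SimpleGraph U) (Vset Wset : Set U) (ie : ∀ v w : U, M w → M v)

/-- one step of a normalized walk: a hop within a fiber or an edge identification -/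
def TStep (a b : Σ u, M u) : Prop :=
  a.1 = b.1 ∨ cutRel M G Vset Wset ie a b ∨ cutRel M G Vset Wset ie b a

lemma cutRel_ne {a b : Σ u, M u} (h : cutRel M G Vset Wset ie a b) : a.1 ≠ b.1 := by
  obtain ⟨v, w, x, hv, hw, hadj, rfl, rfl⟩ := h
  exact fun hh => hadj.ne' hh

/-- cost of prefixing a zero-cost linking path -/
lemma wcost_prepend_links :
    ∀ (l : List (Σ u, M u)) (x : Σ u, M u),
    List.Chain (fun p q => cutRel M G Vset Wset ie p q ∨ cutRel M G Vset Wset ie q p) x l →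
    ∀ (p' : List (Σ u, M u)) (hp' : p' ≠ []),
    (x :: l).getLast (List.cons_ne_nil _ _) = p'.head hp' →
    wcost (x :: (l ++ p')) = wcost p'
  | [], x, _, p', hp', hlast => by
    obtain ⟨h, t, rfl⟩ : ∃ h t, p' = h :: t := ⟨p'.head hp', p'.tail, (List.cons_head_tail hp').symm⟩
    simp only [List.getLast_singleton] at hlast
    simp only [List.nil_append, hlast, wcost_cons_cons, List.head_cons]
    rw [fiberDist_self]; ring
  | y :: l, x, hc, p', hp', hlast => by
    obtain ⟨hxy, hc⟩ := List.isChain_cons_cons.1 hc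
    have ih := wcost_prepend_links l y hc p' hp' (by rwa [List.getLast_cons (List.cons_ne_nil _ _)] at hlast)
    simp only [List.cons_append] at ih ⊢
    rw [wcost_cons_cons, ih, fiberDist_ne]
    · ring
    · rcases hxy with h | h
      · exact cutRel_ne G Vset Wset ie h
      · exact (cutRel_ne G Vset Wset ie h).symm

/-- every linking chain gives a walk of no greater cost -/
lemma chain_to_walk :
    ∀ (c : List ((Σ u, M u) × (Σ u, M u))) (x y : Σ u, M u),
    IsLinkingChainM M (Relation.EqvGen (cutRel M G Vset Wset ie)) c x y →
    ∃ (p : List (Σ u, M u)) (hp : p ≠ []),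
      p.Chain' (TStep G Vset Wset ie) ∧ p.head hp = x ∧ p.getLast hp = y ∧
      wcost p ≤ chainLengthM M (fun _ => inferInstance) c
  | [], x, y, h => absurd rfl h.1
  | [pr], x, y, h => by
    obtain ⟨hne, hh, hl, hfib, hch⟩ := h
    refine ⟨[pr.1, pr.2], by simp, ?_, ?_, ?_, ?_⟩
    · exact List.isChain_cons_cons.2 ⟨Or.inl (hfib pr (by simp)), List.isChain_singleton _⟩
    · simpa using hh
    · simpa using hl
    · simp only [wcost_cons_cons, chainLengthM, List.map, List.sum_cons, List.sum_nil]
      simp [wcost]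
  | pr :: pr' :: c', x, y, h => by
    obtain ⟨hne, hh, hl, hfib, hch⟩ := h
    have hlink : Relation.EqvGen (cutRel M G Vset Wset ie) pr.2 pr'.1 :=
      (List.isChain_cons_cons.1 hch).1
    have htail : IsLinkingChainM M (Relation.EqvGen (cutRel M G Vset Wset ie)) (pr' :: c') pr'.1 y := by
      refine ⟨List.cons_ne_nil _ _, rfl, ?_, ?_, (List.isChain_cons_cons.1 hch).2⟩
      · rw [← hl]
        exact congrArg (fun z => z.2) (List.getLast_cons (List.cons_ne_nil pr' c')).symm
      · intro q hq; exact hfib q (by simp [hq])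
    obtain ⟨p', hp', hc', hh', hl', hw'⟩ := chain_to_walk (pr' :: c') pr'.1 y htail
    obtain ⟨l, hcl, hll⟩ := rtg_exists_list (eqvGen_iff_rtg.1 hlink)
    refine ⟨pr.1 :: pr.2 :: (l ++ p'), by simp, ?_, by simpa using hh, ?_, ?_⟩
    · refine List.isChain_cons_cons.2 ⟨Or.inl (hfib pr (by simp)), ?_⟩
      have h₁ : List.Chain' (TStep G Vset Wset ie) (pr.2 :: l) := by
        show List.Chain (TStep G Vset Wset ie) pr.2 l
        exact List.IsChain.imp (fun a b hab => Or.inr hab) hcl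
      rw [show pr.2 :: (l ++ p') = (pr.2 :: l) ++ p' from rfl]
      apply List.IsChain.append h₁ hc'
      intro z hz w hw
      rw [List.getLast?_eq_getLast (l := pr.2 :: l) (by simp)] at hz
      rw [List.head?_eq_head hp'] at hw
      simp only [Option.mem_def, Option.some_inj] at hz hw
      rw [← hz, ← hw, hll, ← hh']
      exact Or.inl rfl
    · rw [List.getLast_cons (show pr.2 :: (l ++ p') ≠ [] by simp)]
      exact (List.getLast_append_of_ne_nil (l := pr.2 :: l) _ hp').trans hl'
    · have hz := wcost_prepend_links G Vset Wset ie l pr.2 hcl p' hp' (by rw [hll, hh'])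
      have : wcost (pr.1 :: pr.2 :: (l ++ p')) =
          fiberDistM M (fun _ => inferInstance) pr.1 pr.2 + wcost (pr.2 :: (l ++ p')) := rfl
      rw [this, hz]
      have : chainLengthM M (fun _ => inferInstance) (pr :: pr' :: c') =
          fiberDistM M (fun _ => inferInstance) pr.1 pr.2 +
          chainLengthM M (fun _ => inferInstance) (pr' :: c') := by
        simp [chainLengthM]
      rw [this]
      exact add_le_add le_rfl hw'

/-- bundled walk predicate -/
def IsTWalk (p : List (Σ u, M u)) (x y : Σ u, M u) : Prop :=
  ∃ hp : p ≠ [], p.Chain' (TStep G Vset Wset ie) ∧ p.head hp = x ∧ p.getLast hp = y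

lemma IsTWalk.pair {x y : Σ u, M u} (h : TStep G Vset Wset ie x y) :
    IsTWalk G Vset Wset ie [x, y] x y :=
  ⟨by simp, List.isChain_cons_cons.2 ⟨h, List.isChain_singleton _⟩, rfl, rfl⟩

lemma IsTWalk.single (x : Σ u, M u) : IsTWalk G Vset Wset ie [x] x x :=
  ⟨by simp, List.isChain_singleton _, rfl, rfl⟩

lemma IsTWalk.cons {a x y : Σ u, M u} {p : List (Σ u, M u)}
    (h : IsTWalk G Vset Wset ie p x y) (hstep : TStep G Vset Wset ie a x) :
    IsTWalk G Vset Wset ie (a :: p) a y := by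
  obtain ⟨hp, hc, hh, hl⟩ := h
  refine ⟨List.cons_ne_nil _ _, ?_, rfl, ?_⟩
  · refine List.isChain_cons.2 ?_
    refine ⟨?_, hc⟩
    intro z hz
    rw [List.head?_eq_head hp] at hz
    simp only [Option.mem_def, Option.some_inj] at hz
    subst hz; rwa [hh]
  · rw [List.getLast_cons hp]; exact hl

lemma walk_to_chain :
    ∀ (p : List (Σ u, M u)) (x y : Σ u, M u), IsTWalk G Vset Wset ie p x y →
    ∃ c, IsLinkingChainM M (Relation.EqvGen (cutRel M G Vset Wset ie)) c x y ∧
      chainLengthM M (fun _ => inferInstance) c = wcost p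
  | [], x, y, h => absurd rfl h.1
  | [a], x, y, h => by
    obtain ⟨hp, hc, hh, hl⟩ := h
    simp only [List.head_cons, List.getLast_singleton] at hh hl
    subst hh; subst hl
    refine ⟨[(a, a)], ⟨by simp, rfl, rfl, by simp, List.isChain_singleton _⟩, ?_⟩
    simp [chainLengthM, wcost, fiberDist_self]
  | a :: b :: l, x, y, h => by
    obtain ⟨hp, hc, hh, hl⟩ := h
    simp only [List.head_cons] at hh
    subst hh
    obtain ⟨hab, hc'⟩ := List.isChain_cons_cons.1 hc
    have htail : IsTWalk G Vset Wset ie (b :: l) b y := by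
      refine ⟨List.cons_ne_nil _ _, hc', rfl, ?_⟩
      rw [← hl]
      exact (List.getLast_cons (List.cons_ne_nil b l)).symm
    obtain ⟨c', ⟨hne', hh', hl', hfib', hch'⟩, hlen'⟩ := walk_to_chain (b :: l) b y htail
    rcases hab with hfib | hcr
    · -- hop within a fiber
      refine ⟨(a, b) :: c', ⟨List.cons_ne_nil _ _, rfl, ?_, ?_, ?_⟩, ?_⟩
      · rw [List.getLast_cons hne']; exact hl'
      · intro q hq
        rcases List.mem_cons.1 hq with h | h
        · subst h; exact hfib
        · exact hfib' q h
      · refine List.isChain_cons.2 ?_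
        refine ⟨?_, hch'⟩
        intro z hz
        rw [List.head?_eq_head hne'] at hz
        simp only [Option.mem_def, Option.some_inj] at hz
        subst hz
        rw [hh']
        exact Relation.EqvGen.refl _
      · simp only [chainLengthM, List.map, List.sum_cons] at hlen' ⊢
        rw [wcost_cons_cons, hlen']
    · -- edge step
      refine ⟨(a, a) :: c', ⟨List.cons_ne_nil _ _, rfl, ?_, ?_, ?_⟩, ?_⟩
      · rw [List.getLast_cons hne']; exact hl'
      · intro q hq
        rcases List.mem_cons.1 hq with h | h
        · subst h; rfl
        · exact hfib' q h
      · refine List.isChain_cons.2 ?_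
        refine ⟨?_, hch'⟩
        intro z hz
        rw [List.head?_eq_head hne'] at hz
        simp only [Option.mem_def, Option.some_inj] at hz
        subst hz
        rw [hh']
        rcases hcr with h | h
        · exact Relation.EqvGen.rel _ _ h
        · exact Relation.EqvGen.symm _ _ (Relation.EqvGen.rel _ _ h)
      · simp only [chainLengthM, List.map, List.sum_cons] at hlen' ⊢
        have hne2 : a.1 ≠ b.1 := by
          rcases hcr with h | h
          · exact cutRel_ne G Vset Wset ie h
          · exact (cutRel_ne G Vset Wset ie h).symm
        rw [wcost_cons_cons, hlen', fiberDist_self, fiberDist_ne hne2]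

lemma quotDist_le_wcost {x y : Σ u, M u} {p : List (Σ u, M u)}
    (h : IsTWalk G Vset Wset ie p x y) :
    quotDistM M (fun _ => inferInstance) (Relation.EqvGen (cutRel M G Vset Wset ie)) x y
      ≤ wcost p := by
  obtain ⟨c, hc, hlen⟩ := walk_to_chain G Vset Wset ie p x y h
  exact csInf_le ⟨0, fun L hL => by obtain ⟨c', _, hL'⟩ := hL; exact hL' ▸ chainLength_nonneg c'⟩
    ⟨c, hc, hlen⟩

lemma le_quotDist {x y : Σ u, M u} {K : ℝ} (hex : ∃ p, IsTWalk G Vset Wset ie p x y)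
    (h : ∀ p, IsTWalk G Vset Wset ie p x y → K ≤ wcost p) :
    K ≤ quotDistM M (fun _ => inferInstance) (Relation.EqvGen (cutRel M G Vset Wset ie)) x y := by
  apply le_csInf
  · obtain ⟨p, hp⟩ := hex
    obtain ⟨c, hc, _⟩ := walk_to_chain G Vset Wset ie p x y hp
    exact ⟨_, c, hc, rfl⟩
  · rintro L ⟨c, hc, rfl⟩
    obtain ⟨p, hp, hchain, hh, hl, hw⟩ := chain_to_walk G Vset Wset ie c x y hc
    exact le_trans (h p ⟨hp, hchain, hh, hl⟩) hw

lemma exists_tWalk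
    (hbip : ∀ u v, G.Adj u v → (u ∈ Vset ∧ v ∈ Wset) ∨ (u ∈ Wset ∧ v ∈ Vset))
    (hneM : ∀ u, Nonempty (M u)) :
    ∀ {u₁ u₂ : U} (w : G.Walk u₁ u₂) (pp : M u₁) (q : M u₂),
    ∃ p, IsTWalk G Vset Wset ie p ⟨u₁, pp⟩ ⟨u₂, q⟩ := by
  intro u₁ u₂ w
  induction w with
  | nil =>
    intro pp q
    exact ⟨_, IsTWalk.pair G Vset Wset ie (Or.inl rfl)⟩
  | @cons u₁ u₃ u₂ h w' ih =>
    intro pp q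
    rcases hbip _ _ h with ⟨hV, hW⟩ | ⟨hW, hV⟩
    · obtain ⟨z⟩ := hneM u₃
      obtain ⟨p', hp'⟩ := ih z q
      have hstep : TStep G Vset Wset ie ⟨u₁, ie u₁ u₃ z⟩ ⟨u₃, z⟩ :=
        Or.inr (Or.inr ⟨u₁, u₃, z, hV, hW, h, rfl, rfl⟩)
      have h1 := IsTWalk.cons G Vset Wset ie hp' hstep
      have hstep2 : TStep G Vset Wset ie ⟨u₁, pp⟩ ⟨u₁, ie u₁ u₃ z⟩ := Or.inl rfl
      exact ⟨_, IsTWalk.cons G Vset Wset ie h1 hstep2⟩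
    · obtain ⟨p', hp'⟩ := ih (ie u₃ u₁ pp) q
      have hstep : TStep G Vset Wset ie ⟨u₁, pp⟩ ⟨u₃, ie u₃ u₁ pp⟩ :=
        Or.inr (Or.inl ⟨u₃, u₁, pp, hV, hW, h.symm, rfl, rfl⟩)
      exact ⟨_, IsTWalk.cons G Vset Wset ie hp' hstep⟩

lemma exists_tWalk_all (hconnG : G.Connected)
    (hbip : ∀ u v, G.Adj u v → (u ∈ Vset ∧ v ∈ Wset) ∨ (u ∈ Wset ∧ v ∈ Vset))
    (hneM : ∀ u, Nonempty (M u)) (x y : Σ u, M u) :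
    ∃ p, IsTWalk G Vset Wset ie p x y := by
  obtain ⟨w⟩ := hconnG x.1 y.1
  obtain ⟨p, hp⟩ := exists_tWalk G Vset Wset ie hbip hneM w x.2 y.2
  exact ⟨p, hp⟩

section Iota

variable {Z : Type*} [MetricSpace Z] (ι : (Σ u, M u) → Z)
variable (hι : ∀ x y, dist (ι x) (ι y) = quotDistM M (fun _ => inferInstance)
    (Relation.EqvGen (cutRel M G Vset Wset ie)) x y)

include hι

lemma dist_iota_le_wcost {x y : Σ u, M u} {p : List (Σ u, M u)}
    (h : IsTWalk G Vset Wset ie p x y) : dist (ι x) (ι y) ≤ wcost p := by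
  rw [hι]; exact quotDist_le_wcost G Vset Wset ie h

lemma dist_iota_fiber_le (u : U) (p q : M u) :
    dist (ι ⟨u, p⟩) (ι ⟨u, q⟩) ≤ dist p q := by
  have := dist_iota_le_wcost G Vset Wset ie ι hι
    (IsTWalk.pair G Vset Wset ie (x := ⟨u, p⟩) (y := ⟨u, q⟩) (Or.inl rfl))
  rwa [wcost_cons_cons, fiberDist_same, show wcost [(⟨u,q⟩ : Σ u, M u)] = 0 from rfl, add_zero] at this

lemma iota_glue {v w : U} (hv : v ∈ Vset) (hw : w ∈ Wset) (hadj : G.Adj v w) (z : M w) :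
    ι ⟨w, z⟩ = ι ⟨v, ie v w z⟩ := by
  have hstep : TStep G Vset Wset ie ⟨w, z⟩ ⟨v, ie v w z⟩ :=
    Or.inr (Or.inl ⟨v, w, z, hv, hw, hadj, rfl, rfl⟩)
  have := dist_iota_le_wcost G Vset Wset ie ι hι (IsTWalk.pair G Vset Wset ie hstep)
  rw [wcost_cons_cons, fiberDist_ne (cutRel_ne G Vset Wset ie ⟨v, w, z, hv, hw, hadj, rfl, rfl⟩),
    show wcost [(⟨v, ie v w z⟩ : Σ u, M u)] = 0 from rfl] at this
  have h0 : dist (ι ⟨w, z⟩) (ι ⟨v, ie v w z⟩) ≤ 0 := by linarith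
  exact dist_le_zero.1 h0

end Iota

end Aux

section Graph

variable {U : Type*} {G : SimpleGraph U}

lemma mem_support_of_mem_edge {w u₁ u₂ : U} {p : G.Walk u₁ u₂} {e : Sym2 U}
    (he : e ∈ p.edges) (hw : w ∈ e) : w ∈ p.support := by
  induction e with
  | _ x y =>
    rw [Sym2.mem_iff] at hw
    rcases hw with rfl | rfl
    · exact p.fst_mem_support_of_mem_edges he
    · exact p.snd_mem_support_of_mem_edges he

lemma reach_of_walk_avoid {w u₁ u₂ : U} (E : Set (Sym2 U)) (p : G.Walk u₁ u₂)
    (hE : ∀ e ∈ E, w ∈ e) (hw : w ∉ p.support) : (G.deleteEdges E).Reachable u₁ u₂ := by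
  refine ⟨p.toDeleteEdges _ ?_⟩
  intro e he hes
  exact hw (mem_support_of_mem_edge he (hE e hes))

lemma bridge_not_reach (hT : G.IsAcyclic) {v w : U} (h : G.Adj v w) :
    ¬ (G.deleteEdges {s(v, w)}).Reachable v w := by
  have hbr := (SimpleGraph.isAcyclic_iff_forall_adj_isBridge.1 hT) h
  rw [SimpleGraph.isBridge_iff] at hbr
  exact hbr

lemma adj_delete_of_ne {v w x y : U} (h : G.Adj x y) (hne : s(x, y) ≠ s(v, w)) :
    (G.deleteEdges {s(v, w)}).Adj x y := by
  rw [SimpleGraph.deleteEdges_adj]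
  exact ⟨h, by simpa using hne⟩

/-- in a forest, a walk between two neighbours of `u` avoiding `u` forces them equal -/
lemma tree_no_detour (hT : G.IsAcyclic) {u w₁ w₂ : U} (h1 : G.Adj u w₁) (h2 : G.Adj u w₂)
    (p : G.Walk w₁ w₂) (hp : u ∉ p.support) : w₁ = w₂ := by
  by_contra hne
  have hr1 : (G.deleteEdges {s(u, w₁)}).Reachable w₁ w₂ :=
    reach_of_walk_avoid {s(u, w₁)} p (by intro e he; rw [Set.mem_singleton_iff] at he; simp [he]) hp
  have hr2 : (G.deleteEdges {s(u, w₁)}).Adj w₂ u := by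
    apply adj_delete_of_ne h2.symm
    intro hcon
    rw [Sym2.eq_iff] at hcon
    rcases hcon with ⟨h', h''⟩ | ⟨h', h''⟩
    · exact h1.ne h''
    · exact hne h'.symm
  exact bridge_not_reach hT h1 ((hr1.trans hr2.reachable).symm)

lemma side_total_aux {v w : U} : ∀ {x y : U} (p : G.Walk x y),
    (G.deleteEdges {s(v, w)}).Reachable x y ∨ (G.deleteEdges {s(v, w)}).Reachable x v ∨
      (G.deleteEdges {s(v, w)}).Reachable x w := by
  intro x y p
  induction p with
  | nil => exact Or.inl (SimpleGraph.Reachable.refl _)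
  | @cons a c d h q ih =>
    by_cases he : s(a, c) = s(v, w)
    · rw [Sym2.eq_iff] at he
      rcases he with ⟨ha, hc⟩ | ⟨ha, hc⟩
      · rw [ha]; exact Or.inr (Or.inl (SimpleGraph.Reachable.refl _))
      · rw [ha]; exact Or.inr (Or.inr (SimpleGraph.Reachable.refl _))
    · have hadj : (G.deleteEdges {s(v, w)}).Adj a c := adj_delete_of_ne h he
      rcases ih with h' | h' | h'
      · exact Or.inl (hadj.reachable.trans h')
      · exact Or.inr (Or.inl (hadj.reachable.trans h'))
      · exact Or.inr (Or.inr (hadj.reachable.trans h'))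

/-- every vertex is on one of the two sides of an edge -/
lemma side_total {v w : U} (u : U) (p : G.Walk u v) :
    (G.deleteEdges {s(v, w)}).Reachable u v ∨ (G.deleteEdges {s(v, w)}).Reachable u w := by
  rcases side_total_aux (w := w) p with h | h | h
  · exact Or.inl h
  · exact Or.inl h
  · exact Or.inr h

end Graph

section Lower
open scoped Classical

variable {U : Type*} {M : U → Type*} [∀ u, MetricSpace (M u)]
variable (G : SimpleGraph U) (Vset Wset : Set U) (ie : ∀ v w : U, M w → M v)

lemma sigma_fiber_eq {u : U} {a b : M u} (h : (⟨u, a⟩ : Σ u, M u) = ⟨u, b⟩) : a = b := by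
  simpa using h

lemma wcost_cons_ne (x : Σ u, M u) (l : List (Σ u, M u)) (hl : l ≠ []) :
    wcost (x :: l) = fiberDistM M (fun _ => inferInstance) x (l.head hl) + wcost l := by
  cases l with
  | nil => exact absurd rfl hl
  | cons y t => rfl

lemma wcost_append_singleton :
    ∀ (q : List (Σ u, M u)) (hq : q ≠ []) (z : Σ u, M u),
    wcost (q ++ [z]) = wcost q + fiberDistM M (fun _ => inferInstance) (q.getLast hq) z
  | [], hq, z => absurd rfl hq
  | [a], _, z => by simp [wcost, wcost_cons_cons]
  | a :: a' :: t, _, z => by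
    have ih := wcost_append_singleton (a' :: t) (List.cons_ne_nil _ _) z
    simp only [List.cons_append, wcost_cons_cons] at ih ⊢
    rw [ih, List.getLast_cons (List.cons_ne_nil a' t)]
    ring

lemma split_first {α : Type*} (P : α → Prop) :
    ∀ (l : List α) (hl : l ≠ []), ¬ P (l.head hl) → P (l.getLast hl) →
    ∃ q z r, l = q ++ z :: r ∧ q ≠ [] ∧ (∀ e ∈ q, ¬ P e) ∧ P z
  | [], hl, _, _ => absurd rfl hl
  | [x], _, hh, hlast => by simp at hh hlast; exact absurd hlast hh
  | x :: y :: t, _, hh, hlast => by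
    simp only [List.head_cons] at hh
    by_cases hy : P y
    · exact ⟨[x], y, t, rfl, List.cons_ne_nil _ _, by simpa using hh, hy⟩
    · have hlast' : P ((y :: t).getLast (List.cons_ne_nil _ _)) := by
        rwa [List.getLast_cons (List.cons_ne_nil y t)] at hlast
      obtain ⟨q, z, r, hsp, hqne, hqav, hz⟩ :=
        split_first P (y :: t) (List.cons_ne_nil _ _) (by simpa using hy) hlast'
      refine ⟨x :: q, z, r, by rw [List.cons_append, ← hsp], List.cons_ne_nil _ _, ?_, hz⟩
      intro e he
      rcases List.mem_cons.1 he with rfl | he'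
      · exact hh
      · exact hqav e he'

lemma cutRel_adj' {a b : Σ u, M u} (h : cutRel M G Vset Wset ie a b) : G.Adj b.1 a.1 := by
  obtain ⟨v, w, x, _, _, hadj, rfl, rfl⟩ := h
  exact hadj

lemma walk_fibers :
    ∀ (q : List (Σ u, M u)) (hq : q ≠ []), q.Chain' (TStep G Vset Wset ie) →
    ∃ W : G.Walk (q.head hq).1 (q.getLast hq).1, ∀ s ∈ W.support, ∃ e ∈ q, e.1 = s
  | [], hq, _ => absurd rfl hq
  | [x], _, _ => ⟨SimpleGraph.Walk.nil, by intro s hs; simp at hs; exact ⟨x, by simp, hs.symm⟩⟩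
  | x :: y :: t, _, hc => by
    obtain ⟨hstep, hc'⟩ := List.isChain_cons_cons.1 hc
    obtain ⟨W', hW'⟩ := walk_fibers (y :: t) (List.cons_ne_nil _ _) hc'
    have hgl : ((y :: t).getLast (List.cons_ne_nil _ _)).1 =
        ((x :: y :: t).getLast (List.cons_ne_nil _ _)).1 := by
      rw [List.getLast_cons (List.cons_ne_nil y t)]
    rcases hstep with hfib | hcr | hcr
    · refine ⟨(W'.copy (by simpa using hfib.symm) hgl), ?_⟩
      intro s hs
      rw [SimpleGraph.Walk.support_copy] at hs
      obtain ⟨e, he, hee⟩ := hW' s hs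
      exact ⟨e, by simp [he], hee⟩
    · have hadj : G.Adj x.1 ((y :: t).head (List.cons_ne_nil _ _)).1 := (cutRel_adj' G Vset Wset ie hcr).symm
      refine ⟨(SimpleGraph.Walk.cons hadj W').copy (show x.1 = ((x :: y :: t).head (List.cons_ne_nil _ _)).1 from rfl) hgl, ?_⟩
      intro s hs
      rw [SimpleGraph.Walk.support_copy, SimpleGraph.Walk.support_cons] at hs
      rcases List.mem_cons.1 hs with rfl | hs'
      · exact ⟨x, by simp, rfl⟩
      · obtain ⟨e, he, hee⟩ := hW' s hs'
        exact ⟨e, by simp [he], hee⟩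
    · have hadj : G.Adj x.1 ((y :: t).head (List.cons_ne_nil _ _)).1 := cutRel_adj' G Vset Wset ie hcr
      refine ⟨(SimpleGraph.Walk.cons hadj W').copy (show x.1 = ((x :: y :: t).head (List.cons_ne_nil _ _)).1 from rfl) hgl, ?_⟩
      intro s hs
      rw [SimpleGraph.Walk.support_copy, SimpleGraph.Walk.support_cons] at hs
      rcases List.mem_cons.1 hs with rfl | hs'
      · exact ⟨x, by simp, rfl⟩
      · obtain ⟨e, he, hee⟩ := hW' s hs'
        exact ⟨e, by simp [he], hee⟩

lemma fiber_pt : ∀ (y : Σ u, M u) (u : U), y.1 = u → ∃ c : M u, y = ⟨u, c⟩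
  | ⟨yu, yc⟩, u, h => by
    dsimp at h
    subst h
    exact ⟨yc, rfl⟩

lemma getLast_congr {α : Type*} {l₁ l₂ : List α} (h : l₁ = l₂) (h₁ : l₁ ≠ []) :
    l₁.getLast h₁ = l₂.getLast (h ▸ h₁) := by subst h; rfl

lemma head_congr {α : Type*} {l₁ l₂ : List α} (h : l₁ = l₂) (h₁ : l₁ ≠ []) :
    l₁.head h₁ = l₂.head (h ▸ h₁) := by subst h; rfl

lemma wcost_ge_dist (hT : G.IsAcyclic) (hdisj : Disjoint Vset Wset)
    (hiso : ∀ v w, v ∈ Vset → w ∈ Wset → G.Adj v w → ∀ x y : M w,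
      dist (ie v w x) (ie v w y) = dist x y) :
    ∀ (n : ℕ) (p : List (Σ u, M u)), p.length ≤ n →
    ∀ (u : U) (a b : M u), IsTWalk G Vset Wset ie p ⟨u, a⟩ ⟨u, b⟩ → dist a b ≤ wcost p := by
  intro n
  induction n with
  | zero =>
    intro p hlen u a b hw
    obtain ⟨hp, _, _, _⟩ := hw
    cases p with
    | nil => exact absurd rfl hp
    | cons x t => simp at hlen
  | succ n ih =>
    intro p hlen u a b hw
    obtain ⟨hp, hc, hh, hl⟩ := hw
    cases p with
    | nil => exact absurd rfl hp
    | cons x t =>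
      cases t with
      | nil =>
        simp only [List.head_cons] at hh
        simp only [List.getLast_singleton] at hl
        have : a = b := sigma_fiber_eq (hh.symm.trans hl)
        rw [this, dist_self]
        exact wcost_nonneg _
      | cons y l =>
        simp only [List.head_cons] at hh
        subst hh
        obtain ⟨hstep, hc'⟩ := List.isChain_cons_cons.1 hc
        have hlast' : ((y :: l).getLast (List.cons_ne_nil _ _)) = ⟨u, b⟩ := by
          rw [← hl]; exact (List.getLast_cons (List.cons_ne_nil y l)).symm
        by_cases hyu : y.1 = u
        · -- hop within fiber u
          obtain ⟨c, rfl⟩ := fiber_pt y u hyu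
          have htail : IsTWalk G Vset Wset ie (⟨u, c⟩ :: l) ⟨u, c⟩ ⟨u, b⟩ :=
            ⟨List.cons_ne_nil _ _, hc', rfl, hlast'⟩
          have hlen2 : (⟨u, c⟩ :: l).length ≤ n := by
            simp only [List.length_cons] at hlen ⊢; omega
          have hIH := ih (⟨u, c⟩ :: l) hlen2 u c b htail
          rw [wcost_cons_cons, fiberDist_same]
          have htri := dist_triangle a c b
          linarith
        · -- excursion
          obtain ⟨q, z, r, hsp, hqne, hqav, hz⟩ :=
            split_first (fun e : Σ u, M u => e.1 = u) (y :: l) (List.cons_ne_nil _ _)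
              (by simpa using hyu) (by rw [hlast'])
          obtain ⟨a', rfl⟩ := fiber_pt z u hz
          have hqhead : q.head hqne = y := by
            have h0 := head_congr hsp (List.cons_ne_nil _ _)
            rw [List.head_cons, List.head_append_of_ne_nil hqne] at h0
            exact h0.symm
          have hcq : List.Chain' (TStep G Vset Wset ie) (q ++ ⟨u, a'⟩ :: r) := by rwa [← hsp]
          obtain ⟨hcq1, hcq2, hjun⟩ := List.isChain_append.1 hcq
          have hjun' : TStep G Vset Wset ie (q.getLast hqne) ⟨u, a'⟩ := by
            apply hjun
            · rw [List.getLast?_eq_getLast hqne]; rfl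
            · rfl
          have hstep1 : TStep G Vset Wset ie ⟨u, a⟩ (q.head hqne) := by rwa [hqhead]
          obtain ⟨W, hWsup⟩ := walk_fibers G Vset Wset ie q hqne hcq1
          have huW : u ∉ W.support := by
            intro hu
            obtain ⟨e, he, hee⟩ := hWsup u hu
            exact hqav e he hee
          have hqheadne : (q.head hqne).1 ≠ u := hqav _ (List.head_mem hqne)
          have hqlastne : (q.getLast hqne).1 ≠ u := hqav _ (List.getLast_mem hqne)
          -- tail walk
          have hglast : (⟨u, a'⟩ :: r).getLast (List.cons_ne_nil _ _) = ⟨u, b⟩ := by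
            rw [← hlast']
            have h0 := getLast_congr hsp (List.cons_ne_nil _ _)
            rw [h0, List.getLast_append_of_ne_nil (l := q) _ (List.cons_ne_nil _ _)]
          have htail : IsTWalk G Vset Wset ie (⟨u, a'⟩ :: r) ⟨u, a'⟩ ⟨u, b⟩ :=
            ⟨List.cons_ne_nil _ _, hcq2, rfl, hglast⟩
          -- length bookkeeping
          have hLq : q.length + r.length + 1 ≤ n := by
            have h0 := congrArg List.length hsp
            simp only [List.length_cons, List.length_append] at h0 hlen
            omega
          have hq1 : 1 ≤ q.length := List.length_pos_iff.2 hqne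
          have hlenq : q.length ≤ n := by omega
          have hlenr : (⟨u, a'⟩ :: r).length ≤ n := by
            simp only [List.length_cons]; omega
          have iht := ih (⟨u, a'⟩ :: r) hlenr u a' b htail
          -- cost decomposition
          have hcost : wcost (⟨u, a⟩ :: y :: l) =
              wcost q + fiberDistM M (fun _ => inferInstance) (q.getLast hqne) ⟨u, a'⟩ +
              wcost (⟨u, a'⟩ :: r) := by
            have h1 : (⟨u, a⟩ :: y :: l : List (Σ u, M u)) = ⟨u, a⟩ :: (q ++ ⟨u, a'⟩ :: r) := by
              rw [hsp]
            rw [h1, wcost_cons_ne _ _ (by simp),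
              List.head_append_of_ne_nil hqne,
              fiberDist_ne (by exact fun hcon => hqheadne hcon.symm),
              wcost_append q ⟨u, a'⟩ r, wcost_append_singleton q hqne ⟨u, a'⟩]
            ring
          have hfd0 : 0 ≤ fiberDistM M (fun _ => inferInstance) (q.getLast hqne) ⟨u, a'⟩ :=
            fiberDist_nonneg _ _
          -- now the case analysis to bound wcost q from below by dist a a'
          have hinner : dist a a' ≤ wcost q := by
            rcases hstep1 with hfib1 | hcr1 | hcr1
            · exact absurd hfib1.symm hqheadne
            · -- u ∈ Wset
              obtain ⟨v1, w1, x1, hv1, hw1, hadj1, hxeq1, hyeq1⟩ := hcr1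
              injection hxeq1 with huw1 hax1
              subst huw1
              have hax1' : a = x1 := eq_of_heq hax1
              subst hax1'
              rcases hjun' with hfib2 | hcr2 | hcr2
              · exact absurd hfib2 hqlastne
              · obtain ⟨v2, w2, x2, hv2, hw2, hadj2, hxeq2, hyeq2⟩ := hcr2
                injection hyeq2 with huv2 _
                subst huv2
                exact absurd hw1 (Set.disjoint_left.1 hdisj hv2)
              · obtain ⟨v2, w2, x2, hv2, hw2, hadj2, hxeq2, hyeq2⟩ := hcr2
                injection hxeq2 with huw2 hax2
                subst huw2
                have hax2' : a' = x2 := eq_of_heq hax2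
                subst hax2'
                have hh1 : (q.head hqne).1 = v1 := by rw [hyeq1]
                have hh2 : (q.getLast hqne).1 = v2 := by rw [hyeq2]
                have hadjh : G.Adj u ((q.head hqne).1) := by rw [hh1]; exact hadj1.symm
                have hadjl : G.Adj u ((q.getLast hqne).1) := by rw [hh2]; exact hadj2.symm
                have heq : (q.head hqne).1 = (q.getLast hqne).1 :=
                  tree_no_detour hT hadjh hadjl W huW
                have hv12 : v1 = v2 := by rw [← hh1, ← hh2, heq]
                subst hv12
                have hinw : IsTWalk G Vset Wset ie q ⟨v1, ie v1 u a⟩ ⟨v1, ie v1 u a'⟩ :=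
                  ⟨hqne, hcq1, hyeq1, hyeq2⟩
                have := ih q hlenq v1 (ie v1 u a) (ie v1 u a') hinw
                rwa [hiso v1 u hv1 hw1 hadj1 a a'] at this
            · -- u ∈ Vset
              obtain ⟨v1, w1, x1, hv1, hw1, hadj1, hxeq1, hyeq1⟩ := hcr1
              injection hyeq1 with huv1 hax1
              subst huv1
              have hax1' : a = ie u w1 x1 := eq_of_heq hax1
              subst hax1'
              rcases hjun' with hfib2 | hcr2 | hcr2
              · exact absurd hfib2 hqlastne
              · obtain ⟨v2, w2, x2, hv2, hw2, hadj2, hxeq2, hyeq2⟩ := hcr2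
                injection hyeq2 with huv2 hax2
                subst huv2
                have hax2' : a' = ie u w2 x2 := eq_of_heq hax2
                subst hax2'
                have hh1 : (q.head hqne).1 = w1 := by rw [hxeq1]
                have hh2 : (q.getLast hqne).1 = w2 := by rw [hxeq2]
                have hadjh : G.Adj u ((q.head hqne).1) := by rw [hh1]; exact hadj1
                have hadjl : G.Adj u ((q.getLast hqne).1) := by rw [hh2]; exact hadj2
                have heq : (q.head hqne).1 = (q.getLast hqne).1 :=
                  tree_no_detour hT hadjh hadjl W huW
                have hw12 : w1 = w2 := by rw [← hh1, ← hh2, heq]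
                subst hw12
                have hinw : IsTWalk G Vset Wset ie q ⟨w1, x1⟩ ⟨w1, x2⟩ :=
                  ⟨hqne, hcq1, hxeq1, hxeq2⟩
                have := ih q hlenq w1 x1 x2 hinw
                rw [hiso u w1 hv1 hw1 hadj1 x1 x2]
                exact this
              · obtain ⟨v2, w2, x2, hv2, hw2, hadj2, hxeq2, hyeq2⟩ := hcr2
                injection hxeq2 with huw2 _
                subst huw2
                exact absurd hv1 (Set.disjoint_left.1 hdisj.symm hw2)
          rw [hcost]
          have htri := dist_triangle a a' b
          linarith

end Lower

section Iota2
open scoped Classical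

variable {U : Type*} {M : U → Type*} [∀ u, MetricSpace (M u)]
variable (G : SimpleGraph U) (Vset Wset : Set U) (ie : ∀ v w : U, M w → M v)
variable {Z : Type*} [MetricSpace Z] (ι : (Σ u, M u) → Z)

variable (hT : G.IsAcyclic) (hconnG : G.Connected) (hdisj : Disjoint Vset Wset)
variable (hbip : ∀ u v, G.Adj u v → (u ∈ Vset ∧ v ∈ Wset) ∨ (u ∈ Wset ∧ v ∈ Vset))
variable (hneM : ∀ u, Nonempty (M u))
variable (hiso : ∀ v w, v ∈ Vset → w ∈ Wset → G.Adj v w → ∀ x y : M w,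
      dist (ie v w x) (ie v w y) = dist x y)
variable (hι : ∀ x y, dist (ι x) (ι y) = quotDistM M (fun _ => inferInstance)
    (Relation.EqvGen (cutRel M G Vset Wset ie)) x y)

include hι hT hconnG hdisj hbip hneM hiso in
lemma dist_iota_fiber_ge (u : U) (p q : M u) :
    dist p q ≤ dist (ι ⟨u, p⟩) (ι ⟨u, q⟩) := by
  rw [hι]
  apply le_quotDist G Vset Wset ie (exists_tWalk_all G Vset Wset ie hconnG hbip hneM _ _)
  intro pl hpl
  exact wcost_ge_dist G Vset Wset ie hT hdisj hiso pl.length pl (le_refl _) u p q hpl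

include hι hT hconnG hdisj hbip hneM hiso in
lemma iota_fiber_injective (u : U) {p q : M u} (h : ι ⟨u, p⟩ = ι ⟨u, q⟩) : p = q := by
  have h2 := dist_iota_fiber_ge G Vset Wset ie ι hT hconnG hdisj hbip hneM hiso hι u p q
  rw [h, dist_self] at h2
  exact dist_le_zero.1 h2

/-- every walk between the two sides of an edge must pass through the middle fiber -/
lemma walk_hits_fiber {v w : U} {x y : Σ u, M u}
    (hx : (G.deleteEdges {s(v, w)}).Reachable x.1 v)
    (hy : ¬ (G.deleteEdges {s(v, w)}).Reachable y.1 v)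
    {p : List (Σ u, M u)} (hp : IsTWalk G Vset Wset ie p x y) :
    ∃ m ∈ p, m.1 = w := by
  by_contra hno
  push_neg at hno
  obtain ⟨hpne, hc, hh, hl⟩ := hp
  obtain ⟨W, hWsup⟩ := walk_fibers G Vset Wset ie p hpne hc
  have hwW : w ∉ W.support := by
    intro hw
    obtain ⟨e, he, hee⟩ := hWsup w hw
    exact hno e he hee
  have hE : ∀ e ∈ ({s(v, w)} : Set (Sym2 U)), w ∈ e := by
    intro e he
    rw [Set.mem_singleton_iff] at he
    rw [he]
    simp
  have hreach : (G.deleteEdges {s(v, w)}).Reachable (p.head hpne).1 (p.getLast hpne).1 :=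
    reach_of_walk_avoid {s(v, w)} W hE hwW
  rw [hh, hl] at hreach
  exact hy (hreach.symm.trans hx)

include hι in
lemma wcost_split_at {x y m : Σ u, M u} {p : List (Σ u, M u)}
    (hp : IsTWalk G Vset Wset ie p x y) (hm : m ∈ p) :
    dist (ι x) (ι m) + dist (ι m) (ι y) ≤ wcost p := by
  obtain ⟨hpne, hc, hh, hl⟩ := hp
  obtain ⟨p₁, p₂, rfl⟩ := List.append_of_mem hm
  have hc2 := (List.isChain_split.1 hc)
  by_cases h1 : p₁ = []
  · subst h1
    simp only [List.nil_append] at *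
    have hxm : x = m := by rw [← hh]; rfl
    subst hxm
    rw [dist_self, zero_add]
    exact dist_iota_le_wcost G Vset Wset ie ι hι ⟨hpne, hc, rfl, hl⟩
  · have hpre : IsTWalk G Vset Wset ie (p₁ ++ [m]) x m := by
      refine ⟨by simp, hc2.1, ?_, ?_⟩
      · rw [← hh, List.head_append_of_ne_nil h1, List.head_append_of_ne_nil h1]
      · exact List.getLast_append_singleton _
    have hsuf : IsTWalk G Vset Wset ie (m :: p₂) m y := by
      refine ⟨List.cons_ne_nil _ _, hc2.2, rfl, ?_⟩
      rw [← hl]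
      exact (List.getLast_append_of_ne_nil (l := p₁) _ (List.cons_ne_nil _ _)).symm
    have h₁ := dist_iota_le_wcost G Vset Wset ie ι hι hpre
    have h₂ := dist_iota_le_wcost G Vset Wset ie ι hι hsuf
    have hw : wcost (p₁ ++ m :: p₂) = wcost (p₁ ++ [m]) + wcost (m :: p₂) :=
      wcost_append p₁ m p₂
    linarith

include hι hT hconnG hdisj hbip hneM hiso in
lemma crossing_bound {v w : U} {xw yw : M w} (hcls : ∀ z : M w, z = xw ∨ z = yw)
    {x y : Σ u, M u}
    (hx : (G.deleteEdges {s(v, w)}).Reachable x.1 v)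
    (hy : ¬ (G.deleteEdges {s(v, w)}).Reachable y.1 v) :
    min (dist (ι x) (ι ⟨w, xw⟩) + dist (ι ⟨w, xw⟩) (ι y))
        (dist (ι x) (ι ⟨w, yw⟩) + dist (ι ⟨w, yw⟩) (ι y)) ≤ dist (ι x) (ι y) := by
  rw [hι x y]
  apply le_quotDist G Vset Wset ie (exists_tWalk_all G Vset Wset ie hconnG hbip hneM _ _)
  intro p hp
  obtain ⟨m, hm, hmw⟩ := walk_hits_fiber G Vset Wset ie hx hy hp
  obtain ⟨z, rfl⟩ := fiber_pt m w hmw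
  have hsplit := wcost_split_at G Vset Wset ie ι hι hp hm
  rcases hcls z with rfl | rfl
  · exact le_trans (min_le_left _ _) hsplit
  · exact le_trans (min_le_right _ _) hsplit

end Iota2

section Topo
open scoped Classical

lemma compl_small_preconn {X : Type*} [TopologicalSpace X]
    (hu : IsPreconnected (Set.univ : Set X))
    (h1 : ∀ p : X, IsPreconnected ({p}ᶜ : Set X))
    (h2 : ∀ p q : X, p ≠ q → IsPreconnected (({p, q} : Set X)ᶜ))
    {P : Set X} (hP : ∃ c d : X, P ⊆ {c, d}) : IsPreconnected Pᶜ := by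
  obtain ⟨c, d, hsub⟩ := hP
  have hsub' : ∀ x ∈ P, x = c ∨ x = d := by
    intro x hx
    simpa using hsub hx
  by_cases hc : c ∈ P <;> by_cases hd : d ∈ P
  · by_cases hcd : c = d
    · have hPeq : P = {c} := by
        apply subset_antisymm
        · intro x hx
          rcases hsub' x hx with h | h
          · exact h
          · rw [Set.mem_singleton_iff, h, hcd]
        · intro x hx
          rw [Set.mem_singleton_iff] at hx
          rw [hx]; exact hc
      rw [hPeq]; exact h1 c
    · have hPeq : P = {c, d} := by
        apply subset_antisymm hsub
        intro x hx
        rcases hx with h | h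
        · rw [h]; exact hc
        · rw [Set.mem_singleton_iff] at h
          rw [h]; exact hd
      rw [hPeq]; exact h2 c d hcd
  · have hPeq : P = {c} := by
      apply subset_antisymm
      · intro x hx
        rcases hsub' x hx with h | h
        · exact h
        · rw [h] at hx; exact absurd hx hd
      · intro x hx
        rw [Set.mem_singleton_iff] at hx
        rw [hx]; exact hc
    rw [hPeq]; exact h1 c
  · have hPeq : P = {d} := by
      apply subset_antisymm
      · intro x hx
        rcases hsub' x hx with h | h
        · rw [h] at hx; exact absurd hx hc
        · exact h
      · intro x hx
        rw [Set.mem_singleton_iff] at hx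
        rw [hx]; exact hd
    rw [hPeq]; exact h1 d
  · have hPeq : P = ∅ := by
      apply subset_antisymm
      · intro x hx
        rcases hsub' x hx with h | h
        · rw [h] at hx; exact absurd hx hc
        · rw [h] at hx; exact absurd hx hd
      · exact Set.empty_subset _
    rw [hPeq, Set.compl_empty]; exact hu

variable {U : Type*} {M : U → Type*} [∀ u, MetricSpace (M u)]
variable (G : SimpleGraph U) (Vset Wset : Set U) (ie : ∀ v w : U, M w → M v)
variable {Z : Type*} [MetricSpace Z] (ι : (Σ u, M u) → Z)

/-- the image of a fiber with the preimages of `T` removed -/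
def piece (T : Set Z) (v : U) : Set Z := (fun q : M v => ι ⟨v, q⟩) '' {q | ι ⟨v, q⟩ ∉ T}

lemma piece_subset_cT (T : Set Z) (v : U) : piece ι T v ⊆ Tᶜ := by
  rintro z ⟨q, hq, rfl⟩
  exact hq

lemma piece_preconn (v : U)
    (hvconn : ConnectedSpace (M v))
    (hnocut : ∀ p : M v, IsPreconnected ({p}ᶜ : Set (M v)))
    (hnopair : ∀ a b : M v, a ≠ b → IsPreconnected (({a, b} : Set (M v))ᶜ))
    (hinj : ∀ p q : M v, ι ⟨v, p⟩ = ι ⟨v, q⟩ → p = q)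
    (hlip : ∀ p q : M v, dist (ι ⟨v, p⟩) (ι ⟨v, q⟩) ≤ dist p q)
    {T : Set Z} (hT2 : ∃ c d : Z, T ⊆ {c, d}) :
    IsPreconnected (piece ι T v) := by
  obtain ⟨c, d, hsub⟩ := hT2
  have hne : Nonempty (M v) := hvconn.toNonempty
  -- the preimage of T in the fiber is contained in a two-point set
  have hsmall : ∃ c' d' : M v, {q : M v | ι ⟨v, q⟩ ∈ T} ⊆ {c', d'} := by
    have hsc : ({q : M v | ι ⟨v, q⟩ = c}).Subsingleton := by
      intro p hp q hq
      exact hinj p q (hp.trans hq.symm)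
    have hsd : ({q : M v | ι ⟨v, q⟩ = d}).Subsingleton := by
      intro p hp q hq
      exact hinj p q (hp.trans hq.symm)
    obtain ⟨c₀⟩ := hne
    rcases hsc.eq_empty_or_singleton with hce | ⟨c', hc'⟩ <;>
      rcases hsd.eq_empty_or_singleton with hde | ⟨d', hd'⟩
    · refine ⟨c₀, c₀, ?_⟩
      intro q hq
      rcases hsub hq with h | h
      · exact absurd (show q ∈ {q : M v | ι ⟨v, q⟩ = c} from h) (by rw [hce]; simp)
      · exact absurd (show q ∈ {q : M v | ι ⟨v, q⟩ = d} from h) (by rw [hde]; simp)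
    · refine ⟨d', d', ?_⟩
      intro q hq
      rcases hsub hq with h | h
      · exact absurd (show q ∈ {q : M v | ι ⟨v, q⟩ = c} from h) (by rw [hce]; simp)
      · have : q ∈ ({d'} : Set (M v)) := hd' ▸ h
        simp at this; simp [this]
    · refine ⟨c', c', ?_⟩
      intro q hq
      rcases hsub hq with h | h
      · have : q ∈ ({c'} : Set (M v)) := hc' ▸ h
        simp at this; simp [this]
      · exact absurd (show q ∈ {q : M v | ι ⟨v, q⟩ = d} from h) (by rw [hde]; simp)
    · refine ⟨c', d', ?_⟩
      intro q hq
      rcases hsub hq with h | h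
      · have : q ∈ ({c'} : Set (M v)) := hc' ▸ h
        simp at this; simp [this]
      · have : q ∈ ({d'} : Set (M v)) := hd' ▸ h
        simp at this; simp [this]
  have hpre : IsPreconnected ({q : M v | ι ⟨v, q⟩ ∈ T}ᶜ) := by
    haveI := hvconn
    exact compl_small_preconn isPreconnected_univ hnocut hnopair hsmall
  have hlipc : Continuous (fun q : M v => ι ⟨v, q⟩) := by
    refine LipschitzWith.continuous (K := 1) ?_
    apply LipschitzWith.of_dist_le_mul
    intro p q
    rw [NNReal.coe_one, one_mul]
    exact hlip p q
  have : piece ι T v = (fun q : M v => ι ⟨v, q⟩) '' ({q : M v | ι ⟨v, q⟩ ∈ T}ᶜ) := rfl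
  rw [this]
  exact hpre.image _ hlipc.continuousOn

end Topo

section Union
open scoped Classical

variable {U : Type*} {M : U → Type*} [∀ u, MetricSpace (M u)]
variable (G : SimpleGraph U) (Vset Wset : Set U) (ie : ∀ v w : U, M w → M v)
variable {Z : Type*} [MetricSpace Z] (ι : (Σ u, M u) → Z)

variable (hdisj : Disjoint Vset Wset)
variable (hbip : ∀ u v, G.Adj u v → (u ∈ Vset ∧ v ∈ Wset) ∨ (u ∈ Wset ∧ v ∈ Vset))
variable (hglue : ∀ v w, v ∈ Vset → w ∈ Wset → G.Adj v w → ∀ z : M w,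
    ι ⟨w, z⟩ = ι ⟨v, ie v w z⟩)

include hdisj hbip hglue in
lemma pieces_chain (T : Set Z)
    (hpieces : ∀ v ∈ Vset, IsPreconnected (piece ι T v))
    (hbridge : ∀ w ∈ Wset, ∃ z : M w, ι ⟨w, z⟩ ∉ T) :
    ∀ (k : ℕ) {v v' : U}, v ∈ Vset → v' ∈ Vset → ∀ (Wk : G.Walk v v'), Wk.length ≤ k →
    ∃ t : Set Z, t ⊆ (⋃ v'' ∈ Vset, piece ι T v'') ∧ piece ι T v ⊆ t ∧ piece ι T v' ⊆ t ∧
      IsPreconnected t := by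
  intro k
  induction k with
  | zero =>
    intro v v' hv hv' Wk hlen
    cases Wk with
    | nil =>
      exact ⟨piece ι T v, Set.subset_biUnion_of_mem hv, subset_rfl, subset_rfl, hpieces v hv⟩
    | cons h W₂ => simp at hlen
  | succ k ih =>
    intro v v' hv hv' Wk hlen
    cases Wk with
    | nil =>
      exact ⟨piece ι T v, Set.subset_biUnion_of_mem hv, subset_rfl, subset_rfl, hpieces v hv⟩
    | @cons _ u₂ _ h₁ W₂ =>
      have hw2 : u₂ ∈ Wset := by
        rcases hbip _ _ h₁ with ⟨_, h⟩ | ⟨h, _⟩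
        · exact h
        · exact absurd hv (Set.disjoint_right.1 hdisj h)
      cases W₂ with
      | nil => exact absurd hv' (Set.disjoint_right.1 hdisj hw2)
      | @cons _ u₃ _ h₂ W₃ =>
        have hu₃ : u₃ ∈ Vset := by
          rcases hbip _ _ h₂ with ⟨h, _⟩ | ⟨_, h⟩
          · exact absurd h (Set.disjoint_right.1 hdisj hw2)
          · exact h
        have hlen3 : W₃.length ≤ k := by
          simp only [SimpleGraph.Walk.length_cons] at hlen
          omega
        obtain ⟨t', ht'sub, ht'3, ht'v', ht'pre⟩ := ih hu₃ hv' W₃ hlen3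
        obtain ⟨z, hz⟩ := hbridge u₂ hw2
        have hg1 : ι ⟨u₂, z⟩ = ι ⟨v, ie v u₂ z⟩ := hglue v u₂ hv hw2 h₁ z
        have hg2 : ι ⟨u₂, z⟩ = ι ⟨u₃, ie u₃ u₂ z⟩ := hglue u₃ u₂ hu₃ hw2 h₂.symm z
        have hb1 : ι ⟨u₂, z⟩ ∈ piece ι T v := by
          refine ⟨ie v u₂ z, ?_, hg1.symm⟩
          show ι ⟨v, ie v u₂ z⟩ ∉ T
          rw [← hg1]; exact hz
        have hb2 : ι ⟨u₂, z⟩ ∈ piece ι T u₃ := by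
          refine ⟨ie u₃ u₂ z, ?_, hg2.symm⟩
          show ι ⟨u₃, ie u₃ u₂ z⟩ ∉ T
          rw [← hg2]; exact hz
        refine ⟨piece ι T v ∪ t', ?_, Set.subset_union_left, ?_, ?_⟩
        · exact Set.union_subset (Set.subset_biUnion_of_mem hv) ht'sub
        · exact ht'v'.trans Set.subset_union_right
        · exact IsPreconnected.union (ι ⟨u₂, z⟩) hb1 (ht'3 hb2) (hpieces v hv) ht'pre

include hdisj hbip hglue in
lemma pieces_union_preconn (hconnG : G.Connected) (T : Set Z)
    (hpieces : ∀ v ∈ Vset, IsPreconnected (piece ι T v))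
    (hbridge : ∀ w ∈ Wset, ∃ z : M w, ι ⟨w, z⟩ ∉ T) :
    IsPreconnected (⋃ v ∈ Vset, piece ι T v) := by
  apply isPreconnected_of_forall_pair
  intro x hx y hy
  simp only [Set.mem_iUnion] at hx hy
  obtain ⟨v, hv, hxv⟩ := hx
  obtain ⟨v', hv', hyv⟩ := hy
  obtain ⟨Wk⟩ := hconnG v v'
  obtain ⟨t, htsub, htv, htv', htpre⟩ :=
    pieces_chain G Vset Wset ie ι hdisj hbip hglue T hpieces hbridge Wk.length hv hv' Wk
      (le_refl _)
  exact ⟨t, htsub, htv hxv, htv' hyv, htpre⟩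

include hdisj hbip hglue in
lemma iota_mem_pieces (T : Set Z) (hpart : Vset ∪ Wset = Set.univ)
    (hnb : ∀ w ∈ Wset, ∃ v ∈ Vset, G.Adj v w)
    (a : Σ u, M u) (ha : ι a ∉ T) : ι a ∈ ⋃ v ∈ Vset, piece ι T v := by
  obtain ⟨u, m⟩ := a
  have hu : u ∈ Vset ∪ Wset := hpart ▸ Set.mem_univ u
  rcases hu with hu | hu
  · exact Set.mem_biUnion hu ⟨m, ha, rfl⟩
  · obtain ⟨v, hv, hadj⟩ := hnb u hu
    have hg : ι ⟨u, m⟩ = ι ⟨v, ie v u m⟩ := hglue v u hv hu hadj m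
    refine Set.mem_biUnion hv ⟨ie v u m, ?_, hg.symm⟩
    show ι ⟨v, ie v u m⟩ ∉ T
    rw [← hg]; exact ha

end Union

section Closure
open scoped Classical

variable {Z : Type*} [MetricSpace Z]

lemma compl_pair_subset_closure {α : Type*} (ι : α → Z) (hdense : DenseRange ι)
    (c d : Z) (D : Set Z) (hD : ∀ a : α, ι a ≠ c → ι a ≠ d → ι a ∈ D) :
    ({c, d} : Set Z)ᶜ ⊆ closure D := by
  intro z hz
  simp only [Set.mem_compl_iff, Set.mem_insert_iff, Set.mem_singleton_iff, not_or] at hz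
  obtain ⟨hzc, hzd⟩ := hz
  rw [Metric.mem_closure_iff]
  intro ε hε
  have hδ : 0 < min ε (min (dist z c) (dist z d)) := by
    apply lt_min hε
    exact lt_min (dist_pos.2 hzc) (dist_pos.2 hzd)
  obtain ⟨a, ha⟩ := Metric.denseRange_iff.1 hdense z _ hδ
  have hac : ι a ≠ c := by
    intro hcon
    rw [hcon] at ha
    have h1 : dist z c < dist z c := lt_of_lt_of_le ha (le_trans (min_le_right _ _) (min_le_left _ _))
    exact lt_irrefl _ h1
  have had : ι a ≠ d := by
    intro hcon
    rw [hcon] at ha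
    have h1 : dist z d < dist z d := lt_of_lt_of_le ha (le_trans (min_le_right _ _) (min_le_right _ _))
    exact lt_irrefl _ h1
  exact ⟨ι a, hD a hac had, lt_of_lt_of_le ha (min_le_left _ _)⟩

end Closure

section Misc
open scoped Classical

lemma third_point {X : Type*} [MetricSpace X] [ConnectedSpace X] {a b : X} (hab : a ≠ b) :
    ∃ c : X, c ≠ a ∧ c ≠ b := by
  by_contra h
  push_neg at h
  have hcl : ({a} : Set X) = Metric.ball a (dist a b) := by
    apply subset_antisymm
    · intro c hc
      rw [Set.mem_singleton_iff] at hc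
      rw [hc]
      simp [Metric.mem_ball, dist_pos.2 hab]
    · intro c hc
      rw [Metric.mem_ball] at hc
      rw [Set.mem_singleton_iff]
      by_contra hca
      have hcb := h c hca
      rw [hcb] at hc
      rw [dist_comm] at hc
      exact lt_irrefl _ hc
  have hopen : IsOpen ({a} : Set X) := hcl ▸ Metric.isOpen_ball
  have hclopen : IsClopen ({a} : Set X) := ⟨isClosed_singleton, hopen⟩
  rcases isClopen_iff.1 hclopen with h0 | h0
  · exact absurd h0 (Set.singleton_ne_empty a)
  · have : b ∈ ({a} : Set X) := h0 ▸ Set.mem_univ b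
    rw [Set.mem_singleton_iff] at this
    exact hab this.symm

variable {U : Type*} {M : U → Type*} [∀ u, MetricSpace (M u)]
variable {Z : Type*} [MetricSpace Z]

lemma image_fiber (ι : (Σ u, M u) → Z) (w : U) (x y : M w) (hcls : ∀ z : M w, z = x ∨ z = y) :
    ι '' {a : Σ u, M u | a.1 = w} = {ι ⟨w, x⟩, ι ⟨w, y⟩} := by
  apply subset_antisymm
  · rintro z ⟨a, ha, rfl⟩
    obtain ⟨c, rfl⟩ := fiber_pt a w ha
    rcases hcls c with rfl | rfl
    · exact Set.mem_insert _ _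
    · exact Set.mem_insert_of_mem _ rfl
  · intro z hz
    rcases hz with h | h
    · exact ⟨⟨w, x⟩, rfl, h.symm⟩
    · rw [Set.mem_singleton_iff] at h
      exact ⟨⟨w, y⟩, rfl, h.symm⟩

end Misc

section Separation
open scoped Classical

variable {U : Type*} {M : U → Type*} [∀ u, MetricSpace (M u)]
variable (G : SimpleGraph U) (Vset Wset : Set U) (ie : ∀ v w : U, M w → M v)
variable {Z : Type*} [MetricSpace Z] (ι : (Σ u, M u) → Z)
variable (hT : G.IsAcyclic) (hconnG : G.Connected) (hdisj : Disjoint Vset Wset)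
variable (hbip : ∀ u v, G.Adj u v → (u ∈ Vset ∧ v ∈ Wset) ∨ (u ∈ Wset ∧ v ∈ Vset))
variable (hneM : ∀ u, Nonempty (M u))
variable (hiso : ∀ v w, v ∈ Vset → w ∈ Wset → G.Adj v w → ∀ x y : M w,
      dist (ie v w x) (ie v w y) = dist x y)
variable (hι : ∀ x y, dist (ι x) (ι y) = quotDistM M (fun _ => inferInstance)
    (Relation.EqvGen (cutRel M G Vset Wset ie)) x y)

include hT hconnG hdisj hbip hneM hiso hι in
lemma fiber_pair_separates (hdense : DenseRange ι)
    {w : U} (hw : w ∈ Wset) {x y : M w} (hxy : x ≠ y) (hcls : ∀ z : M w, z = x ∨ z = y)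
    {v v' : U} (hv : v ∈ Vset) (hv' : v' ∈ Vset) (hadj : G.Adj v w) (hadj' : G.Adj v' w)
    (hvv' : v ≠ v')
    (hconnMv : ConnectedSpace (M v)) (hconnMv' : ConnectedSpace (M v')) :
    ¬ IsPreconnected (({ι ⟨w, x⟩, ι ⟨w, y⟩} : Set Z)ᶜ) := by
  set s1 := ι ⟨w, x⟩ with hs1
  set s2 := ι ⟨w, y⟩ with hs2
  set Lset : Set (Σ u, M u) := {a | (G.deleteEdges {s(v, w)}).Reachable a.1 v} with hLset
  set Rset : Set (Σ u, M u) := {a | ¬ (G.deleteEdges {s(v, w)}).Reachable a.1 v} with hRset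
  set L := closure (ι '' Lset) with hLdef
  set R := closure (ι '' Rset) with hRdef
  have hnotreachw : ¬ (G.deleteEdges {s(v, w)}).Reachable w v :=
    fun h => bridge_not_reach hT hadj h.symm
  have hnotreachv' : ¬ (G.deleteEdges {s(v, w)}).Reachable v' v := by
    intro h
    have hedge : (G.deleteEdges {s(v, w)}).Adj v' w := by
      apply adj_delete_of_ne hadj'
      intro hcon
      rw [Sym2.eq_iff] at hcon
      rcases hcon with ⟨h1, _⟩ | ⟨h1, h2⟩
      · exact hvv' h1.symm
      · exact hadj'.ne h1
    exact hnotreachw (hedge.symm.reachable.trans h)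
  have hglue1 : ι ⟨w, x⟩ = ι ⟨v, ie v w x⟩ := iota_glue G Vset Wset ie ι hι hv hw hadj x
  have hglue2 : ι ⟨w, y⟩ = ι ⟨v, ie v w y⟩ := iota_glue G Vset Wset ie ι hι hv hw hadj y
  have hglue1' : ι ⟨w, x⟩ = ι ⟨v', ie v' w x⟩ := iota_glue G Vset Wset ie ι hι hv' hw hadj' x
  have hglue2' : ι ⟨w, y⟩ = ι ⟨v', ie v' w y⟩ := iota_glue G Vset Wset ie ι hι hv' hw hadj' y
  have hfGe := dist_iota_fiber_ge G Vset Wset ie ι hT hconnG hdisj hbip hneM hiso hι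
  have key0 : ∀ aL ∈ Lset, ∀ bR ∈ Rset,
      min (dist (ι aL) s1 + dist s1 (ι bR)) (dist (ι aL) s2 + dist s2 (ι bR)) ≤
        dist (ι aL) (ι bR) := by
    intro aL haL bR hbR
    exact crossing_bound G Vset Wset ie ι hT hconnG hdisj hbip hneM hiso hι hcls haL hbR
  -- the two closures meet only in the pair
  have hcap : L ∩ R ⊆ {s1, s2} := by
    rintro z ⟨hzL, hzR⟩
    have key : ∀ ε > (0 : ℝ), min (dist z s1) (dist z s2) ≤ 3 * ε := by
      intro ε hε
      obtain ⟨za, hza, hda⟩ := Metric.mem_closure_iff.1 hzL ε hε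
      obtain ⟨aL, haL, rfl⟩ := hza
      obtain ⟨zb, hzb, hdb⟩ := Metric.mem_closure_iff.1 hzR ε hε
      obtain ⟨bR, hbR, rfl⟩ := hzb
      have hcross := key0 aL haL bR hbR
      have hab : dist (ι aL) (ι bR) < 2 * ε := by
        have := dist_triangle (ι aL) z (ι bR)
        rw [dist_comm (ι aL) z] at this
        linarith
      rcases min_le_iff.1 (le_of_lt (lt_of_le_of_lt hcross hab)) with h | h
      · have h1 : dist z s1 ≤ dist z (ι aL) + dist (ι aL) s1 := dist_triangle _ _ _
        have h2 : dist (ι aL) s1 ≤ 2 * ε := by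
          have := dist_nonneg (x := s1) (y := ι bR)
          linarith
        exact le_trans (min_le_left _ _) (by linarith)
      · have h1 : dist z s2 ≤ dist z (ι aL) + dist (ι aL) s2 := dist_triangle _ _ _
        have h2 : dist (ι aL) s2 ≤ 2 * ε := by
          have := dist_nonneg (x := s2) (y := ι bR)
          linarith
        exact le_trans (min_le_right _ _) (by linarith)
    have hle0 : min (dist z s1) (dist z s2) ≤ 0 := by
      by_contra hpos
      push_neg at hpos
      have := key (min (dist z s1) (dist z s2) / 6) (by linarith)
      linarith
    have h0 : min (dist z s1) (dist z s2) = 0 :=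
      le_antisymm hle0 (le_min dist_nonneg dist_nonneg)
    rcases min_cases (dist z s1) (dist z s2) with ⟨he, _⟩ | ⟨he, _⟩
    · rw [he] at h0
      exact Or.inl (dist_eq_zero.1 h0)
    · rw [he] at h0
      exact Or.inr (dist_eq_zero.1 h0)
  have huniv : L ∪ R = Set.univ := by
    rw [hLdef, hRdef, ← closure_union, ← Set.image_union]
    have : Lset ∪ Rset = Set.univ := by
      apply Set.eq_univ_of_forall
      intro a
      by_cases h : (G.deleteEdges {s(v, w)}).Reachable a.1 v
      · exact Or.inl h
      · exact Or.inr h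
    rw [this, Set.image_univ, hdense.closure_range]
  -- points on each side away from the pair
  have hiexy : ie v w x ≠ ie v w y := by
    intro hcon
    have := hiso v w hv hw hadj x y
    rw [hcon, dist_self] at this
    exact hxy (dist_eq_zero.1 this.symm)
  have hiexy' : ie v' w x ≠ ie v' w y := by
    intro hcon
    have := hiso v' w hv' hw hadj' x y
    rw [hcon, dist_self] at this
    exact hxy (dist_eq_zero.1 this.symm)
  haveI := hconnMv
  haveI := hconnMv'
  obtain ⟨p₀, hp₀1, hp₀2⟩ := third_point hiexy
  obtain ⟨p₁, hp₁1, hp₁2⟩ := third_point hiexy'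
  set z1 := ι ⟨v, p₀⟩ with hz1def
  set z2 := ι ⟨v', p₁⟩ with hz2def
  have hz1s1 : z1 ≠ s1 := by
    intro hcon
    rw [hz1def, hs1, hglue1] at hcon
    exact hp₀1 (iota_fiber_injective G Vset Wset ie ι hT hconnG hdisj hbip hneM hiso hι v hcon)
  have hz1s2 : z1 ≠ s2 := by
    intro hcon
    rw [hz1def, hs2, hglue2] at hcon
    exact hp₀2 (iota_fiber_injective G Vset Wset ie ι hT hconnG hdisj hbip hneM hiso hι v hcon)
  have hz2s1 : z2 ≠ s1 := by
    intro hcon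
    rw [hz2def, hs1, hglue1'] at hcon
    exact hp₁1 (iota_fiber_injective G Vset Wset ie ι hT hconnG hdisj hbip hneM hiso hι v' hcon)
  have hz2s2 : z2 ≠ s2 := by
    intro hcon
    rw [hz2def, hs2, hglue2'] at hcon
    exact hp₁2 (iota_fiber_injective G Vset Wset ie ι hT hconnG hdisj hbip hneM hiso hι v' hcon)
  have hmemL : (⟨v, p₀⟩ : Σ u, M u) ∈ Lset := SimpleGraph.Reachable.refl v
  have hmemR : (⟨v', p₁⟩ : Σ u, M u) ∈ Rset := hnotreachv'
  -- z1 avoids R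
  have hz1R : z1 ∉ R := by
    intro hmem
    set δ := min (dist p₀ (ie v w x)) (dist p₀ (ie v w y)) with hδdef
    have hδpos : 0 < δ := lt_min (dist_pos.2 hp₀1) (dist_pos.2 hp₀2)
    obtain ⟨zb, hzb, hdb⟩ := Metric.mem_closure_iff.1 hmem δ hδpos
    obtain ⟨bR, hbR, rfl⟩ := hzb
    have hcross := key0 ⟨v, p₀⟩ hmemL bR hbR
    have hd1 : δ ≤ dist z1 s1 := by
      rw [hz1def, hs1, hglue1]
      exact le_trans (min_le_left _ _) (hfGe v p₀ (ie v w x))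
    have hd2 : δ ≤ dist z1 s2 := by
      rw [hz1def, hs2, hglue2]
      exact le_trans (min_le_right _ _) (hfGe v p₀ (ie v w y))
    have hge : δ ≤ min (dist z1 s1 + dist s1 (ι bR)) (dist z1 s2 + dist s2 (ι bR)) := by
      apply le_min
      · have := dist_nonneg (x := s1) (y := ι bR); linarith
      · have := dist_nonneg (x := s2) (y := ι bR); linarith
    have : δ ≤ dist z1 (ι bR) := le_trans hge hcross
    linarith
  -- z2 avoids L
  have hz2L : z2 ∉ L := by
    intro hmem
    set δ := min (dist p₁ (ie v' w x)) (dist p₁ (ie v' w y)) with hδdef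
    have hδpos : 0 < δ := lt_min (dist_pos.2 hp₁1) (dist_pos.2 hp₁2)
    obtain ⟨za, hza, hda⟩ := Metric.mem_closure_iff.1 hmem δ hδpos
    obtain ⟨aL, haL, rfl⟩ := hza
    have hcross := key0 aL haL ⟨v', p₁⟩ hmemR
    have hd1 : δ ≤ dist s1 z2 := by
      rw [hz2def, hs1, hglue1', dist_comm]
      exact le_trans (min_le_left _ _) (hfGe v' p₁ (ie v' w x))
    have hd2 : δ ≤ dist s2 z2 := by
      rw [hz2def, hs2, hglue2', dist_comm]
      exact le_trans (min_le_right _ _) (hfGe v' p₁ (ie v' w y))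
    have hge : δ ≤ min (dist (ι aL) s1 + dist s1 z2) (dist (ι aL) s2 + dist s2 z2) := by
      apply le_min
      · have := dist_nonneg (x := ι aL) (y := s1); linarith
      · have := dist_nonneg (x := ι aL) (y := s2); linarith
    have h1 : δ ≤ dist (ι aL) z2 := le_trans hge hcross
    rw [dist_comm] at h1
    linarith
  -- now refute preconnectedness
  intro hpre
  have hres := hpre Rᶜ Lᶜ (isClosed_closure.isOpen_compl) (isClosed_closure.isOpen_compl)
    ?_ ?_ ?_
  · obtain ⟨zz, hzz1, hzz2, hzz3⟩ := hres
    have : zz ∈ L ∪ R := huniv ▸ Set.mem_univ zz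
    rcases this with h | h
    · exact hzz3 h
    · exact hzz2 h
  · intro zz hzz
    by_cases h : zz ∈ R
    · right
      intro hL
      exact hzz (hcap ⟨hL, h⟩)
    · exact Or.inl h
  · refine ⟨z1, ?_, hz1R⟩
    intro hcon
    rcases hcon with h | h
    · exact hz1s1 h
    · rw [Set.mem_singleton_iff] at h
      exact hz1s2 h
  · refine ⟨z2, ?_, hz2L⟩
    intro hcon
    rcases hcon with h | h
    · exact hz2s1 h
    · rw [Set.mem_singleton_iff] at h
      exact hz2s2 h

end Separation


/-- If the constituent spaces of a tree system of cut pairs are connected with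
no cut points and no cut pairs, then the completion `M̄_T = Z` of the total space is connected
without cut points, and its cut pairs are exactly the two-point subspaces `M_w` (`w ∈ W`),
each of which is inseparable. -/
theorem stmt16 {U : Type*} [Countable U] (G : SimpleGraph U) (hT : G.IsTree)
    (Vset Wset : Set U) (hpart : Vset ∪ Wset = Set.univ) (hdisj : Disjoint Vset Wset)
    (hbip : ∀ u v, G.Adj u v → (u ∈ Vset ∧ v ∈ Wset) ∨ (u ∈ Wset ∧ v ∈ Vset))
    (hval : ∀ w ∈ Wset, (G.neighborSet w).Finite ∧ 2 ≤ (G.neighborSet w).ncard)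
    (M : U → Type*) [∀ u, MetricSpace (M u)] [∀ u, CompactSpace (M u)]
    (htwo : ∀ w ∈ Wset, ∃ x y : M w, x ≠ y ∧ ∀ z : M w, z = x ∨ z = y)
    (ie : ∀ v w : U, M w → M v)
    (hie : ∀ v w, v ∈ Vset → w ∈ Wset → G.Adj v w → Function.Injective (ie v w))
    (hiso : ∀ v w, v ∈ Vset → w ∈ Wset → G.Adj v w → ∀ x y : M w,
      dist (ie v w x) (ie v w y) = dist x y)
    (hint : ∀ v w w', v ∈ Vset → w ∈ Wset → w' ∈ Wset → G.Adj v w → G.Adj v w' →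
      w ≠ w' → (Set.range (ie v w) ∩ Set.range (ie v w')).Subsingleton)
    (hnull : ∀ v ∈ Vset, ∀ ε > (0 : ℝ),
      {w | w ∈ Wset ∧ G.Adj v w ∧ ε ≤ Metric.diam (Set.range (ie v w))}.Finite)
    (v₀ : U) (hv₀ : v₀ ∈ Vset)
    (hshrink : ∀ v ∈ Vset, ∀ k : ℕ, G.dist v₀ v = 2 * k → ∀ x y : M v,
      quotDistM M (fun _ => inferInstance) (Relation.EqvGen (cutRel M G Vset Wset ie))
        ⟨v, x⟩ ⟨v, y⟩ ≤ (1 / 2 : ℝ) ^ k)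
    -- constituent spaces are connected with no cut points and no cut pairs
    (hconn : ∀ v ∈ Vset, ConnectedSpace (M v))
    (hnocut : ∀ v ∈ Vset, ∀ p : M v, IsPreconnected ({p}ᶜ : Set (M v)))
    (hnopair : ∀ v ∈ Vset, ∀ a b : M v, a ≠ b →
      IsPreconnected (({a, b} : Set (M v))ᶜ))
    -- `Z` is the completion `M̄_T` of the total space
    (Z : Type*) [MetricSpace Z] [CompleteSpace Z]
    (ι : (Σ u, M u) → Z)
    (hι : ∀ x y, dist (ι x) (ι y) = quotDistM M (fun _ => inferInstance)
      (Relation.EqvGen (cutRel M G Vset Wset ie)) x y)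
    (hdense : DenseRange ι) :
    (ConnectedSpace Z ∧ ∀ p : Z, IsPreconnected ({p}ᶜ : Set Z)) ∧
    (∀ s : Set Z, IsCutPairSet s ↔
      ∃ w ∈ Wset, s = ι '' {a : Σ u, M u | a.1 = w}) ∧
    (∀ s : Set Z, IsCutPairSet s → IsInseparableCutPair s) := by
  classical
  have hAc : G.IsAcyclic := hT.2
  have hconnG : G.Connected := hT.1
  have hneM : ∀ u, Nonempty (M u) := by
    intro u
    have hu : u ∈ Vset ∪ Wset := hpart ▸ Set.mem_univ u
    rcases hu with hu | hu
    · exact (hconn u hu).toNonempty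
    · obtain ⟨x, y, _, _⟩ := htwo u hu
      exact ⟨x⟩
  have hglue : ∀ v w, v ∈ Vset → w ∈ Wset → G.Adj v w → ∀ z : M w,
      ι ⟨w, z⟩ = ι ⟨v, ie v w z⟩ :=
    fun v w hv hw hadj z => iota_glue G Vset Wset ie ι hι hv hw hadj z
  have hfInj : ∀ u : U, ∀ p q : M u, ι ⟨u, p⟩ = ι ⟨u, q⟩ → p = q :=
    fun u p q h => iota_fiber_injective G Vset Wset ie ι hAc hconnG hdisj hbip hneM hiso hι u h
  have hfLip : ∀ u : U, ∀ p q : M u, dist (ι ⟨u, p⟩) (ι ⟨u, q⟩) ≤ dist p q :=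
    fun u p q => dist_iota_fiber_le G Vset Wset ie ι hι u p q
  have hnb : ∀ w ∈ Wset, ∃ v ∈ Vset, G.Adj v w := by
    intro w hw
    obtain ⟨hfin, hcard⟩ := hval w hw
    have hne : (G.neighborSet w).Nonempty := by
      apply Set.nonempty_of_ncard_ne_zero
      omega
    obtain ⟨v, hvadj⟩ := hne
    rcases hbip w v hvadj with ⟨hwV, _⟩ | ⟨_, hvV⟩
    · exact absurd hw (Set.disjoint_left.1 hdisj hwV)
    · exact ⟨v, hvV, hvadj.symm⟩
  have hnb2 : ∀ w ∈ Wset, ∃ v v', v ∈ Vset ∧ v' ∈ Vset ∧ G.Adj v w ∧ G.Adj v' w ∧ v ≠ v' := by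
    intro w hw
    obtain ⟨hfin, hcard⟩ := hval w hw
    obtain ⟨a, b, ha, hb, hab⟩ := (Set.one_lt_ncard_iff hfin).1 (by omega)
    have haV : a ∈ Vset := by
      rcases hbip w a ha with ⟨hwV, _⟩ | ⟨_, hV⟩
      · exact absurd hw (Set.disjoint_left.1 hdisj hwV)
      · exact hV
    have hbV : b ∈ Vset := by
      rcases hbip w b hb with ⟨hwV, _⟩ | ⟨_, hV⟩
      · exact absurd hw (Set.disjoint_left.1 hdisj hwV)
      · exact hV
    exact ⟨a, b, haV, hbV, ha.symm, hb.symm, hab⟩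
  have hpieces : ∀ (T : Set Z), (∃ c d : Z, T ⊆ {c, d}) → ∀ v ∈ Vset,
      IsPreconnected (piece ι T v) :=
    fun T hT2 v hv => piece_preconn ι v (hconn v hv) (hnocut v hv) (hnopair v hv)
      (fun p q => hfInj v p q) (fun p q => hfLip v p q) hT2
  have hZne : Nonempty Z := ⟨ι ⟨v₀, (hneM v₀).some⟩⟩
  have hpairne : ∀ w, w ∈ Wset → ∀ x y : M w, x ≠ y → ι ⟨w, x⟩ ≠ ι ⟨w, y⟩ := by
    intro w hw x y hxy hcon
    exact hxy (hfInj w x y hcon)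
  have hDpre : ∀ (T : Set Z), (∃ c d : Z, T ⊆ {c, d}) →
      (∀ w ∈ Wset, ∃ z : M w, ι ⟨w, z⟩ ∉ T) →
      IsPreconnected (⋃ v ∈ Vset, piece ι T v) := fun T hT2 hbr =>
    pieces_union_preconn G Vset Wset ie ι hdisj hbip hglue hconnG T (hpieces T hT2) hbr
  have hmem_pieces : ∀ (T : Set Z) (a : Σ u, M u), ι a ∉ T →
      ι a ∈ ⋃ v ∈ Vset, piece ι T v :=
    fun T a ha => iota_mem_pieces G Vset Wset ie ι hdisj hbip hglue T hpart hnb a ha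
  have hsubT : ∀ (T : Set Z), (⋃ v ∈ Vset, piece ι T v) ⊆ Tᶜ := by
    intro T z hz
    simp only [Set.mem_iUnion] at hz
    obtain ⟨v, hv, hzv⟩ := hz
    exact piece_subset_cT ι T v hzv
  -- part 1a
  have hconnZ : ConnectedSpace Z := by
    have hbr0 : ∀ w ∈ Wset, ∃ z : M w, ι ⟨w, z⟩ ∉ (∅ : Set Z) := by
      intro w hw
      obtain ⟨x, _, _, _⟩ := htwo w hw
      exact ⟨x, Set.notMem_empty _⟩
    have hD := hDpre ∅ ⟨hZne.some, hZne.some, Set.empty_subset _⟩ hbr0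
    have hrange : Set.range ι ⊆ ⋃ v ∈ Vset, piece ι (∅ : Set Z) v := by
      rintro z ⟨a, rfl⟩
      exact hmem_pieces ∅ a (Set.notMem_empty _)
    have huniv2 : closure (⋃ v ∈ Vset, piece ι (∅ : Set Z) v) = Set.univ := by
      apply subset_antisymm (Set.subset_univ _)
      rw [← hdense.closure_range]
      exact closure_mono hrange
    rw [connectedSpace_iff_univ]
    constructor
    · exact ⟨hZne.some, Set.mem_univ _⟩
    · rw [← huniv2]
      exact hD.closure
  -- part 1b
  have hnocutZ : ∀ p : Z, IsPreconnected ({p}ᶜ : Set Z) := by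
    intro p
    have hbr : ∀ w ∈ Wset, ∃ z : M w, ι ⟨w, z⟩ ∉ ({p} : Set Z) := by
      intro w hw
      obtain ⟨x, y, hxy, _⟩ := htwo w hw
      by_cases hx : ι ⟨w, x⟩ = p
      · refine ⟨y, ?_⟩
        rw [Set.mem_singleton_iff, ← hx]
        exact (hpairne w hw x y hxy).symm
      · exact ⟨x, by simpa using hx⟩
    have hD := hDpre {p} ⟨p, p, by simp⟩ hbr
    apply hD.subset_closure
    · exact hsubT {p}
    · have hsub2 := compl_pair_subset_closure ι hdense p p _
        (fun a ha _ => hmem_pieces {p} a (by simpa using ha))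
      intro z hz
      apply hsub2
      simpa using hz
  have himg : ∀ w, w ∈ Wset → ∃ x y : M w, x ≠ y ∧ (∀ z : M w, z = x ∨ z = y) ∧
      ι '' {a : Σ u, M u | a.1 = w} = {ι ⟨w, x⟩, ι ⟨w, y⟩} := by
    intro w hw
    obtain ⟨x, y, hxy, hcls⟩ := htwo w hw
    exact ⟨x, y, hxy, hcls, image_fiber ι w x y hcls⟩
  have hdir2 : ∀ w ∈ Wset, IsCutPairSet (ι '' {a : Σ u, M u | a.1 = w}) := by
    intro w hw
    obtain ⟨x, y, hxy, hcls, heq⟩ := himg w hw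
    obtain ⟨v, v', hv, hv', hadj, hadj', hvv'⟩ := hnb2 w hw
    rw [heq]
    refine ⟨⟨ι ⟨w, x⟩, ι ⟨w, y⟩, hpairne w hw x y hxy, rfl⟩, ?_, ?_⟩
    · exact fiber_pair_separates G Vset Wset ie ι hAc hconnG hdisj hbip hneM hiso hι hdense
        hw hxy hcls hv hv' hadj hadj' hvv' (hconn v hv) (hconn v' hv')
    · intro p _
      exact hnocutZ p
  have hdir1 : ∀ s : Set Z, IsCutPairSet s → ∃ w ∈ Wset, s = ι '' {a : Σ u, M u | a.1 = w} := by
    intro s hs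
    by_contra hno
    push_neg at hno
    obtain ⟨⟨a, b, hab, rfl⟩, hnpre, _⟩ := hs
    have hbr : ∀ w ∈ Wset, ∃ z : M w, ι ⟨w, z⟩ ∉ ({a, b} : Set Z) := by
      intro w hw
      by_contra hcon
      push_neg at hcon
      obtain ⟨x, y, hxy, hcls, heq⟩ := himg w hw
      have h1 := hcon x
      have h2 := hcon y
      simp only [Set.mem_insert_iff, Set.mem_singleton_iff] at h1 h2
      have hne := hpairne w hw x y hxy
      have hset : ({ι ⟨w, x⟩, ι ⟨w, y⟩} : Set Z) = {a, b} := by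
        rcases h1 with h1 | h1 <;> rcases h2 with h2 | h2
        · exact absurd (h1.trans h2.symm) hne
        · rw [h1, h2]
        · rw [h1, h2]
          exact Set.pair_comm b a
        · exact absurd (h1.trans h2.symm) hne
      exact hno w hw (by rw [heq, hset])
    have hD := hDpre {a, b} ⟨a, b, subset_rfl⟩ hbr
    have hpre2 : IsPreconnected (({a, b} : Set Z)ᶜ) := by
      apply hD.subset_closure
      · exact hsubT {a, b}
      · exact compl_pair_subset_closure ι hdense a b _
          (fun a' ha1 ha2 => hmem_pieces {a, b} a' (by simp [ha1, ha2]))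
    exact hnpre hpre2
  refine ⟨⟨hconnZ, hnocutZ⟩, ?_, ?_⟩
  · intro s
    constructor
    · exact hdir1 s
    · rintro ⟨w, hw, rfl⟩
      exact hdir2 w hw
  · intro s hs
    refine ⟨hs, ?_⟩
    intro t ht htne a b hab hseq hsep
    obtain ⟨hat, hbt, hC⟩ := hsep
    obtain ⟨w, hw, hsw⟩ := hdir1 s hs
    obtain ⟨w', hw', htw⟩ := hdir1 t ht
    obtain ⟨x, y, hxy, hcls, heqs⟩ := himg w hw
    obtain ⟨x', y', hxy', hcls', heqt⟩ := himg w' hw'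
    obtain ⟨v, hv, hadj⟩ := hnb w hw
    have hCpre : IsPreconnected (piece ι t v) :=
      hpieces t ⟨ι ⟨w', x'⟩, ι ⟨w', y'⟩, by rw [htw, heqt]⟩ v hv
    have hCsub : piece ι t v ⊆ tᶜ := piece_subset_cT ι t v
    have hsa : a ∈ s := by rw [hseq]; exact Set.mem_insert _ _
    have hsb : b ∈ s := by rw [hseq]; exact Set.mem_insert_of_mem _ rfl
    have hmem : ∀ c ∈ s, c ∉ t → c ∈ piece ι t v := by
      intro c hcs hct
      rw [hsw, heqs] at hcs
      rcases hcs with h | h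
      · refine ⟨ie v w x, ?_, ?_⟩
        · show ι ⟨v, ie v w x⟩ ∉ t
          rw [← hglue v w hv hw hadj x, ← h]
          exact hct
        · show ι ⟨v, ie v w x⟩ = c
          rw [← hglue v w hv hw hadj x, ← h]
      · rw [Set.mem_singleton_iff] at h
        refine ⟨ie v w y, ?_, ?_⟩
        · show ι ⟨v, ie v w y⟩ ∉ t
          rw [← hglue v w hv hw hadj y, ← h]
          exact hct
        · show ι ⟨v, ie v w y⟩ = c
          rw [← hglue v w hv hw hadj y, ← h]
    exact hC (piece ι t v) hCsub hCpre (hmem a hsa hat) (hmem b hsb hbt)
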